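/- Let N be a positive integer and let V, W : ℂ₊ → M_N(ℂ) be analytic matrix-valued functions on the open upper half-plane ℂ₊ such that W(z) is invertible for every z ∈ ℂ₊ and V(z)*V(z) = W(z)*W(z) for all z ∈ ℂ₊. If there is a sequence (zₙ) in ℂ₊ with |zₙ| → ∞ such that V(zₙ) → I and W(zₙ) → I, then V(z) = W(z) for all z ∈ ℂ₊. -/

import Mathlib

open Matrix Filter

lemma det_diffOn {n : ℕ} {S : Set ℂ} (M : ℂ → Matrix (Fin n) (Fin n) ℂ)
    (h : ∀ i j, DifferentiableOn ℂ (fun z => M z i j) S) :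
    DifferentiableOn ℂ (fun z => (M z).det) S := by
  simp only [Matrix.det_apply']
  exact DifferentiableOn.fun_sum fun σ _ =>
    (DifferentiableOn.fun_finsetProd (fun i _ => h (σ i) i)).const_mul _


/-- Corollary 5.2 (uniqueness for the Wiener–Masani prediction problem): two
analytic matrix functions on the upper half-plane with the same pointwise
modulus `V*V = W*W`, with `W` pointwise invertible, both tending to `I` along
a sequence going to infinity, coincide. -/
theorem stmt_5 {N : ℕ} (hN : 0 < N)
    (V W : ℂ → Matrix (Fin N) (Fin N) ℂ)
    (hV : ∀ i j, DifferentiableOn ℂ (fun z => V z i j) {z : ℂ | 0 < z.im})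
    (hW : ∀ i j, DifferentiableOn ℂ (fun z => W z i j) {z : ℂ | 0 < z.im})
    (hWinv : ∀ z : ℂ, 0 < z.im → IsUnit (W z))
    (hmod : ∀ z : ℂ, 0 < z.im → (V z)ᴴ * V z = (W z)ᴴ * W z)
    (zs : ℕ → ℂ) (hzs : ∀ n, 0 < (zs n).im)
    (hzinf : Tendsto (fun n => ‖zs n‖) atTop atTop)
    (hVlim : Tendsto (fun n => V (zs n)) atTop (nhds 1))
    (hWlim : Tendsto (fun n => W (zs n)) atTop (nhds 1)) :
    ∀ z : ℂ, 0 < z.im → V z = W z := by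
  set S : Set ℂ := {z : ℂ | 0 < z.im} with hS
  have hSo : IsOpen S := isOpen_lt continuous_const Complex.continuous_im
  have hSc : IsPreconnected S := (convex_halfSpace_im_gt 0).isPreconnected
  have hdet : ∀ z ∈ S, (W z).det ≠ 0 := fun z hz =>
    ((Matrix.isUnit_iff_isUnit_det _).1 (hWinv z hz)).ne_zero
  set U : ℂ → Matrix (Fin N) (Fin N) ℂ := fun z => V z * (W z)⁻¹ with hU
  -- entrywise differentiability of U
  have hUdiff : ∀ i j, DifferentiableOn ℂ (fun z => U z i j) S := by
    intro i j
    have hinv : ∀ k, DifferentiableOn ℂ (fun z => (W z)⁻¹ k j) S := by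
      intro k
      have hadj : DifferentiableOn ℂ (fun z => (W z).adjugate k j) S := by
        simp only [Matrix.adjugate_apply]
        apply det_diffOn
        intro p q
        simp only [Matrix.updateRow_apply]
        split_ifs with hpq
        · exact differentiableOn_const _
        · exact hW p q
      have : (fun z => (W z)⁻¹ k j) = fun z => ((W z).det)⁻¹ * (W z).adjugate k j := by
        funext z
        simp [Matrix.inv_def, Ring.inverse_eq_inv', Matrix.smul_apply, smul_eq_mul]
      rw [this]
      exact ((det_diffOn W hW).inv hdet).mul hadj
    have : (fun z => U z i j) = fun z => ∑ k, V z i k * (W z)⁻¹ k j := by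
      funext z; simp [hU, Matrix.mul_apply]
    rw [this]
    exact DifferentiableOn.fun_sum fun k _ => (hV i k).mul (hinv k)
  -- unitarity
  have hUU : ∀ z ∈ S, U z * (U z)ᴴ = 1 := by
    intro z hz
    rw [mul_eq_one_comm]
    have hdu : IsUnit (W z).det := (Matrix.isUnit_iff_isUnit_det _).1 (hWinv z hz)
    have hduH : IsUnit ((W z)ᴴ).det := by
      rw [Matrix.det_conjTranspose]; exact hdu.star
    calc (U z)ᴴ * U z
        = ((W z)ᴴ)⁻¹ * ((V z)ᴴ * V z) * (W z)⁻¹ := by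
          simp only [hU, Matrix.conjTranspose_mul, Matrix.conjTranspose_nonsing_inv]
          noncomm_ring
      _ = (((W z)ᴴ)⁻¹ * (W z)ᴴ) * (W z * (W z)⁻¹) := by
          rw [hmod z hz]; noncomm_ring
      _ = 1 := by rw [Matrix.nonsing_inv_mul _ hduH, Matrix.mul_nonsing_inv _ hdu, one_mul]
  -- row vectors in Euclidean space
  classical
  set a : Fin N → ℂ → EuclideanSpace ℂ (Fin N) := fun i z => WithLp.toLp 2 (fun j => U z i j) with ha
  have hinner : ∀ i z w, (inner ℂ (a i z) (a i w) : ℂ) = ∑ j, star (U z i j) * U w i j := by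
    intro i z w
    simp [ha, PiLp.inner_apply, RCLike.inner_apply, mul_comm]
  have hnorm : ∀ i, ∀ z ∈ S, ‖a i z‖ = 1 := by
    intro i z hz
    have h1 : (inner ℂ (a i z) (a i z) : ℂ) = 1 := by
      rw [hinner]
      have := congrArg (fun M => M i i) (hUU z hz)
      simpa [Matrix.mul_apply, Matrix.conjTranspose_apply, Matrix.one_apply, mul_comm] using this
    have h3 : ‖a i z‖ ^ 2 = 1 := by
      rw [norm_sq_eq_re_inner (𝕜 := ℂ), h1]; simp
    nlinarith [norm_nonneg (a i z)]
  have hI : Complex.I ∈ S := by simp [hS, Complex.I_im]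
  -- U is constant on S
  have hconst : ∀ z ∈ S, U z = U Complex.I := by
    intro z hz
    have key : ∀ i, a i z = a i Complex.I := by
      intro i
      set g : ℂ → ℂ := fun w => inner ℂ (a i Complex.I) (a i w) with hg
      have hg_eq : ∀ w, g w = ∑ k, star (U Complex.I i k) * U w i k := fun w => hinner i _ w
      have hgdiff : DifferentiableOn ℂ g S := by
        have heq : g = fun w => ∑ k, star (U Complex.I i k) * U w i k := funext hg_eq
        rw [heq]
        exact DifferentiableOn.fun_sum fun k _ => (hUdiff i k).const_mul _
      have hgc : g Complex.I = 1 := by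
        have h2 := inner_self_eq_norm_sq_to_K (𝕜 := ℂ) (a i Complex.I)
        show (inner ℂ (a i Complex.I) (a i Complex.I) : ℂ) = 1
        rw [h2, hnorm i _ hI]; norm_num
      have hmax : IsMaxOn (norm ∘ g) S Complex.I := by
        intro w hw
        have h4 := norm_inner_le_norm (𝕜 := ℂ) (a i Complex.I) (a i w)
        rw [hnorm i _ hI, hnorm i w hw, one_mul] at h4
        simp only [Function.comp, Set.mem_setOf_eq, hgc, norm_one]
        exact h4
      have hgeq := Complex.eqOn_of_isPreconnected_of_isMaxOn_norm hSc hSo hgdiff hI hmax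
      have hgz : g z = 1 := by
        have := hgeq hz; simpa [hgc] using this
      have hzero : ‖a i z - a i Complex.I‖ ^ 2 = 0 := by
        rw [@norm_sub_sq ℂ]
        have h5 : (inner ℂ (a i z) (a i Complex.I) : ℂ) = 1 := by
          have h6 := inner_conj_symm (𝕜 := ℂ) (a i z) (a i Complex.I)
          rw [← h6]
          show (starRingEnd ℂ) (g z) = 1
          rw [hgz]; simp
        rw [h5, hnorm i z hz, hnorm i _ hI]; norm_num
      have h7 : a i z - a i Complex.I = 0 := by
        rw [← norm_eq_zero]
        exact pow_eq_zero_iff (two_ne_zero) |>.mp hzero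
      exact sub_eq_zero.mp h7
    ext i j
    exact congrArg (fun v => v j) (key i)
  -- V z = C * W z
  have hVW : ∀ z ∈ S, V z = U Complex.I * W z := by
    intro z hz
    have h1 : U z * W z = V z := by
      rw [hU]
      rw [mul_assoc, Matrix.nonsing_inv_mul _ ((Matrix.isUnit_iff_isUnit_det _).1 (hWinv z hz)),
        mul_one]
    rw [← hconst z hz, h1]
  -- C = 1 via the limit
  have hC : U Complex.I = 1 := by
    ext i j
    have hVe : Tendsto (fun n => V (zs n) i j) atTop
        (nhds ((1 : Matrix (Fin N) (Fin N) ℂ) i j)) := by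
      have hc : Continuous fun M : Matrix (Fin N) (Fin N) ℂ => M i j :=
        (continuous_apply j).comp (continuous_apply i)
      exact (hc.tendsto 1).comp hVlim
    have hWe : ∀ k, Tendsto (fun n => W (zs n) k j) atTop
        (nhds ((1 : Matrix (Fin N) (Fin N) ℂ) k j)) := by
      intro k
      have hc : Continuous fun M : Matrix (Fin N) (Fin N) ℂ => M k j :=
        (continuous_apply j).comp (continuous_apply k)
      exact (hc.tendsto 1).comp hWlim
    have h2 : Tendsto (fun n => ∑ k, U Complex.I i k * W (zs n) k j) atTop
        (nhds (∑ k, U Complex.I i k * (1 : Matrix (Fin N) (Fin N) ℂ) k j)) :=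
      tendsto_finset_sum _ fun k _ => (hWe k).const_mul _
    have h3 : (fun n => V (zs n) i j) = fun n => ∑ k, U Complex.I i k * W (zs n) k j := by
      funext n; rw [hVW (zs n) (hzs n)]; simp [Matrix.mul_apply]
    rw [h3] at hVe
    have h8 := tendsto_nhds_unique hVe h2
    simpa [Matrix.one_apply, mul_ite] using h8.symm
  intro z hz
  rw [hVW z hz, hC, one_mul]
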